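/- arXiv:2107.01950 — 2 statements merged into one kernel-verified Lean document; each statement's English description precedes it below -/
import Mathlib

section
/- Let B be a commutative ring and let F be a functor from commutative B-algebras to sets that preserves filtered colimits (i.e. F is locally of finite presentation). Let B_∞ = colim_{λ∈Λ} B_λ be a filtered colimit of commutative B-algebras. Then the natural map colim_{λ∈Λ} (F(B_λ)/R) → F(B_∞)/R is bijective. -/
noncomputable section

open Polynomial

/-- The multiplicative subset `Σ` of `B[t]` consisting of the polynomials whose values
at `t = 0` and `t = 1` are units of `B`. -/
def RSigma (B : Type*) [CommRing B] : Submonoid (Polynomial B) where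
  carrier := {P | IsUnit (P.eval 0) ∧ IsUnit (P.eval 1)}
  mul_mem' := fun ha hb =>
    ⟨by rw [eval_mul]; exact ha.1.mul hb.1, by rw [eval_mul]; exact ha.2.mul hb.2⟩
  one_mem' := ⟨by simp, by simp⟩

theorem mem_RSigma {B : Type*} [CommRing B] {P : Polynomial B} :
    P ∈ RSigma B ↔ IsUnit (P.eval 0) ∧ IsUnit (P.eval 1) := Iff.rfl

/-- The localization `B[t]_Σ` of `B[t]` at `Σ`. -/
abbrev RLoc (B : Type*) [CommRing B] := Localization (RSigma B)

/-- Evaluation at `t = 0`, extended to `B[t]_Σ`, as a `B`-algebra homomorphism. -/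
def ev0 (B : Type*) [CommRing B] : RLoc B →ₐ[B] B :=
  IsLocalization.liftAlgHom (M := RSigma B) (f := Polynomial.aeval (0 : B))
    (fun y => by simpa using (mem_RSigma.mp y.2).1)

/-- Evaluation at `t = 1`, extended to `B[t]_Σ`, as a `B`-algebra homomorphism. -/
def ev1 (B : Type*) [CommRing B] : RLoc B →ₐ[B] B :=
  IsLocalization.liftAlgHom (M := RSigma B) (f := Polynomial.aeval (1 : B))
    (fun y => by simpa using (mem_RSigma.mp y.2).2)

universe u

variable (B : Type u) [CommRing B]

/-- A functor from the category of commutative `B`-algebras (in the universe `u`)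
to the category of sets. -/
structure SetValuedFunctor (B : Type u) [CommRing B] where
  obj : (C : Type u) → [CommRing C] → [Algebra B C] → Type u
  map : {C D : Type u} → [CommRing C] → [Algebra B C] → [CommRing D] → [Algebra B D] →
    (C →ₐ[B] D) → obj C → obj D
  map_id : ∀ (C : Type u) [CommRing C] [Algebra B C], map (AlgHom.id B C) = id
  map_comp : ∀ {C D E : Type u} [CommRing C] [Algebra B C] [CommRing D] [Algebra B D]
    [CommRing E] [Algebra B E] (f : C →ₐ[B] D) (g : D →ₐ[B] E),
    map (g.comp f) = map g ∘ map f

/-- Evaluation at `t = 0` on `C[t]_{Σ_C}`, as a homomorphism of `B`-algebras. -/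
def ev0R (C : Type u) [CommRing C] [Algebra B C] : RLoc C →ₐ[B] C :=
  IsLocalization.liftAlgHom (M := RSigma C)
    (f := (Polynomial.aeval (0 : C)).restrictScalars B)
    (fun y => by simpa using (mem_RSigma.mp y.2).1)

/-- Evaluation at `t = 1` on `C[t]_{Σ_C}`, as a homomorphism of `B`-algebras. -/
def ev1R (C : Type u) [CommRing C] [Algebra B C] : RLoc C →ₐ[B] C :=
  IsLocalization.liftAlgHom (M := RSigma C)
    (f := (Polynomial.aeval (1 : C)).restrictScalars B)
    (fun y => by simpa using (mem_RSigma.mp y.2).2)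

/-- Two points `x₀ x₁ ∈ F(C)` are directly R-equivalent if they are the two
evaluations of a point of `F(C[t]_Σ)`. -/
def DirectR (F : SetValuedFunctor B) (C : Type u) [CommRing C] [Algebra B C]
    (x₀ x₁ : F.obj C) : Prop :=
  ∃ x : F.obj (RLoc C), F.map (ev0R B C) x = x₀ ∧ F.map (ev1R B C) x = x₁

/-- R-equivalence: the equivalence relation generated by direct R-equivalence. -/
def REquiv (F : SetValuedFunctor B) (C : Type u) [CommRing C] [Algebra B C]
    (x₀ x₁ : F.obj C) : Prop :=
  Relation.EqvGen (DirectR B F C) x₀ x₁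



/-! ### Auxiliary lemmas -/

section Aux

theorem RSigma.map_mem {C D : Type*} [CommRing C] [CommRing D] (φ : C →+* D) {Q : Polynomial C}
    (h : Q ∈ RSigma C) : Q.map φ ∈ RSigma D := by
  rw [mem_RSigma] at h ⊢
  rw [eval_zero_map, eval_one_map]
  exact ⟨h.1.map φ, h.2.map φ⟩

variable {C D E : Type u} [CommRing C] [Algebra B C] [CommRing D] [Algebra B D]
  [CommRing E] [Algebra B E]

/-- The map `C[t]_Σ → D[t]_Σ` induced by a `B`-algebra map `C → D`. -/
def RLocMap (φ : C →ₐ[B] D) : RLoc C →ₐ[B] RLoc D :=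
  IsLocalization.liftAlgHom (M := RSigma C)
    (f := ((IsScalarTower.toAlgHom D (Polynomial D) (RLoc D)).restrictScalars B).comp
      (Polynomial.mapAlgHom φ))
    (fun y => by
      exact IsLocalization.map_units (M := RSigma D) _ ⟨_, RSigma.map_mem φ.toRingHom y.2⟩)

theorem RLocMap_algebraMap (φ : C →ₐ[B] D) (p : Polynomial C) :
    RLocMap B φ (algebraMap (Polynomial C) (RLoc C) p)
      = algebraMap (Polynomial D) (RLoc D) (p.map φ.toRingHom) := by
  simp [RLocMap, IsLocalization.liftAlgHom, IsLocalization.lift_eq]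

theorem RLoc_algHom_ext {T : Type*} [CommRing T] [Algebra B T] {F G : RLoc C →ₐ[B] T}
    (h : ∀ p : Polynomial C, F (algebraMap (Polynomial C) (RLoc C) p)
      = G (algebraMap (Polynomial C) (RLoc C) p)) : F = G := by
  have := IsLocalization.ringHom_ext (M := RSigma C) (S := RLoc C)
    (j := F.toRingHom) (k := G.toRingHom) (RingHom.ext h)
  exact AlgHom.ext fun x => DFunLike.congr_fun this x

theorem RLocMap_comp (φ : C →ₐ[B] D) (ψ : D →ₐ[B] E) :
    RLocMap B (ψ.comp φ) = (RLocMap B ψ).comp (RLocMap B φ) := by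
  apply RLoc_algHom_ext
  intro p
  simp [AlgHom.comp_apply, RLocMap_algebraMap, Polynomial.map_map]
  rfl

theorem RLocMap_mk' (φ : C →ₐ[B] D) (p : Polynomial C) (q : RSigma C) :
    RLocMap B φ (IsLocalization.mk' (RLoc C) p q)
      = IsLocalization.mk' (RLoc D) (p.map φ.toRingHom)
          (⟨q.1.map φ.toRingHom, RSigma.map_mem φ.toRingHom q.2⟩ : RSigma D) := by
  have h1 : RLocMap B φ (IsLocalization.mk' (RLoc C) p q)
      * algebraMap (Polynomial D) (RLoc D) (q.1.map φ.toRingHom)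
      = algebraMap (Polynomial D) (RLoc D) (p.map φ.toRingHom) := by
    rw [← RLocMap_algebraMap, ← map_mul, IsLocalization.mk'_spec, RLocMap_algebraMap]
  have h2 := IsLocalization.mk'_spec (RLoc D) (p.map φ.toRingHom)
    (⟨q.1.map φ.toRingHom, RSigma.map_mem φ.toRingHom q.2⟩ : RSigma D)
  have hu := IsLocalization.map_units (RLoc D)
    (⟨q.1.map φ.toRingHom, RSigma.map_mem φ.toRingHom q.2⟩ : RSigma D)
  exact hu.mul_left_injective (h1.trans h2.symm)

theorem ev0R_algebraMap (p : Polynomial C) :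
    ev0R B C (algebraMap (Polynomial C) (RLoc C) p) = p.eval 0 := by
  simp [ev0R, IsLocalization.liftAlgHom, IsLocalization.lift_eq]

theorem ev1R_algebraMap (p : Polynomial C) :
    ev1R B C (algebraMap (Polynomial C) (RLoc C) p) = p.eval 1 := by
  simp [ev1R, IsLocalization.liftAlgHom, IsLocalization.lift_eq]

theorem ev0R_naturality (φ : C →ₐ[B] D) :
    (ev0R B D).comp (RLocMap B φ) = φ.comp (ev0R B C) := by
  apply RLoc_algHom_ext
  intro p
  simp [AlgHom.comp_apply, RLocMap_algebraMap, ev0R_algebraMap, eval_zero_map]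

theorem ev1R_naturality (φ : C →ₐ[B] D) :
    (ev1R B D).comp (RLocMap B φ) = φ.comp (ev1R B C) := by
  apply RLoc_algHom_ext
  intro p
  simp [AlgHom.comp_apply, RLocMap_algebraMap, ev1R_algebraMap, eval_one_map]

end Aux

theorem SetValuedFunctor.map_map (F : SetValuedFunctor B)
    {C D E : Type u} [CommRing C] [Algebra B C] [CommRing D] [Algebra B D]
    [CommRing E] [Algebra B E] (φ : C →ₐ[B] D) (ψ : D →ₐ[B] E) (x : F.obj C) :
    F.map ψ (F.map φ x) = F.map (ψ.comp φ) x :=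
  (congrFun (F.map_comp φ ψ) x).symm

theorem REquiv_map (F : SetValuedFunctor B) {C D : Type u} [CommRing C] [Algebra B C]
    [CommRing D] [Algebra B D] (φ : C →ₐ[B] D) {a b : F.obj C}
    (h : REquiv B F C a b) : REquiv B F D (F.map φ a) (F.map φ b) := by
  induction h with
  | rel x y hxy =>
    obtain ⟨w, h0, h1⟩ := hxy
    refine Relation.EqvGen.rel _ _ ⟨F.map (RLocMap B φ) w, ?_, ?_⟩
    · rw [F.map_map, ev0R_naturality, ← F.map_map, h0]
    · rw [F.map_map, ev1R_naturality, ← F.map_map, h1]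
  | refl x => exact Relation.EqvGen.refl _
  | symm x y _ ih => exact Relation.EqvGen.symm _ _ ih
  | trans x y z _ _ ih1 ih2 => exact Relation.EqvGen.trans _ _ _ ih1 ih2


/-!
STATEMENT 8: Let `B` be a commutative ring and `F` a functor from commutative
`B`-algebras to sets that preserves filtered colimits (i.e. is locally of finite
presentation).  Let `B_∞ = colim_{λ} B_λ` be a filtered colimit of commutative
`B`-algebras.  Then the natural map `colim_λ (F(B_λ)/R) → F(B_∞)/R` is bijective.

Filtered colimits are rendered concretely: a directed system of `B`-algebras together
with a compatible cocone to `B_∞` which is jointly surjective and in which equality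
stabilizes; preservation of filtered colimits by `F` and the bijectivity of the map
of colimits of R-equivalence classes are rendered elementwise in the standard way.
-/

theorem R_equivalence_classes_commute_with_filtered_colimits
    (B : Type u) [CommRing B] (F : SetValuedFunctor B)
    -- `F` is locally of finite presentation: it preserves filtered colimits of
    -- commutative `B`-algebras
    (hF : ∀ (ι : Type u) [Preorder ι] [IsDirected ι (· ≤ ·)] [Nonempty ι]
        (A : ι → Type u) [∀ i, CommRing (A i)] [∀ i, Algebra B (A i)]
        (f : ∀ i j, i ≤ j → (A i →ₐ[B] A j))
        (_ : ∀ (i j l : ι) (hij : i ≤ j) (hjl : j ≤ l),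
          (f j l hjl).comp (f i j hij) = f i l (hij.trans hjl))
        (Ainf : Type u) [CommRing Ainf] [Algebra B Ainf]
        (g : ∀ i, A i →ₐ[B] Ainf)
        (_ : ∀ (i j : ι) (hij : i ≤ j), (g j).comp (f i j hij) = g i)
        (_ : ∀ z : Ainf, ∃ (i : ι) (a : A i), g i a = z)
        (_ : ∀ (i j : ι) (a : A i) (b : A j), g i a = g j b →
          ∃ (l : ι) (hil : i ≤ l) (hjl : j ≤ l), f i l hil a = f j l hjl b),
        (∀ z : F.obj Ainf, ∃ (i : ι) (x : F.obj (A i)), F.map (g i) x = z) ∧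
        (∀ (i j : ι) (x : F.obj (A i)) (y : F.obj (A j)),
          F.map (g i) x = F.map (g j) y →
          ∃ (l : ι) (hil : i ≤ l) (hjl : j ≤ l),
            F.map (f i l hil) x = F.map (f j l hjl) y))
    -- a filtered direct limit `B_∞ = colim_λ B_λ` of commutative `B`-algebras
    (ι : Type u) [Preorder ι] [IsDirected ι (· ≤ ·)] [Nonempty ι]
    (A : ι → Type u) [∀ i, CommRing (A i)] [∀ i, Algebra B (A i)]
    (f : ∀ i j, i ≤ j → (A i →ₐ[B] A j))
    (hf : ∀ (i j l : ι) (hij : i ≤ j) (hjl : j ≤ l),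
      (f j l hjl).comp (f i j hij) = f i l (hij.trans hjl))
    (Ainf : Type u) [CommRing Ainf] [Algebra B Ainf]
    (g : ∀ i, A i →ₐ[B] Ainf)
    (hg : ∀ (i j : ι) (hij : i ≤ j), (g j).comp (f i j hij) = g i)
    (hsurj : ∀ z : Ainf, ∃ (i : ι) (a : A i), g i a = z)
    (hexact : ∀ (i j : ι) (a : A i) (b : A j), g i a = g j b →
      ∃ (l : ι) (hil : i ≤ l) (hjl : j ≤ l), f i l hil a = f j l hjl b) :
    -- the natural map `colim_λ (F(B_λ)/R) → F(B_∞)/R` is bijective: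
    -- surjectivity
    ((∀ z : F.obj Ainf, ∃ (i : ι) (x : F.obj (A i)),
        REquiv B F Ainf (F.map (g i) x) z) ∧
    -- injectivity
    (∀ (i j : ι) (x : F.obj (A i)) (y : F.obj (A j)),
        REquiv B F Ainf (F.map (g i) x) (F.map (g j) y) →
        ∃ (l : ι) (hil : i ≤ l) (hjl : j ≤ l),
          REquiv B F (A l) (F.map (f i l hil) x) (F.map (f j l hjl) y))) := by

  classical
  -- basic compatibilities
  have hfg : ∀ (i l : ι) (hil : i ≤ l) (a : A i), g l (f i l hil a) = g i a :=
    fun i l hil a => AlgHom.congr_fun (hg i l hil) a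
  have hff : ∀ (i k l : ι) (hik : i ≤ k) (hkl : k ≤ l) (a : A i),
      f k l hkl (f i k hik a) = f i l (hik.trans hkl) a :=
    fun i k l hik hkl a => AlgHom.congr_fun (hf i k l hik hkl) a
  have hmapg : ∀ (i l : ι) (hil : i ≤ l) (p : Polynomial (A i)),
      (p.map (f i l hil).toRingHom).map (g l).toRingHom = p.map (g i).toRingHom := by
    intro i l hil p
    rw [Polynomial.map_map]
    congr 1
    ext a
    exact hfg i l hil a
  have hmapf : ∀ (i k l : ι) (hik : i ≤ k) (hkl : k ≤ l) (p : Polynomial (A i)),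
      (p.map (f i k hik).toRingHom).map (f k l hkl).toRingHom
        = p.map (f i l (hik.trans hkl)).toRingHom := by
    intro i k l hik hkl p
    rw [Polynomial.map_map]
    congr 1
    ext a
    exact hff i k l hik hkl a
  -- P1 : lifting polynomials
  have P1 : ∀ p : Polynomial Ainf, ∃ (i : ι) (q : Polynomial (A i)),
      q.map (g i).toRingHom = p := by
    intro p
    induction p using Polynomial.induction_on' with
    | add p r hp hr =>
      obtain ⟨i, q, hq⟩ := hp
      obtain ⟨j, s, hs⟩ := hr
      obtain ⟨l, hil, hjl⟩ := directed_of (· ≤ ·) i j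
      refine ⟨l, q.map (f i l hil).toRingHom + s.map (f j l hjl).toRingHom, ?_⟩
      rw [Polynomial.map_add, hmapg, hmapg, hq, hs]
    | monomial n a =>
      obtain ⟨i, b, hb⟩ := hsurj a
      exact ⟨i, Polynomial.monomial n b, by rw [Polynomial.map_monomial]; exact congrArg _ hb⟩
  -- stabilization of polynomial equality (same level)
  have Pstab : ∀ (i : ι) (p q : Polynomial (A i)),
      p.map (g i).toRingHom = q.map (g i).toRingHom →
      ∃ (l : ι) (hil : i ≤ l),
        p.map (f i l hil).toRingHom = q.map (f i l hil).toRingHom := by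
    intro i p q h
    have hcoef : ∀ n, g i (p.coeff n) = g i (q.coeff n) := by
      intro n
      have := congrArg (fun r => Polynomial.coeff r n) h
      simpa using this
    choose l hl1 hl2 he using fun n => hexact i i (p.coeff n) (q.coeff n) (hcoef n)
    set d := max p.natDegree q.natDegree with hd
    obtain ⟨L0, hL0⟩ := ((Finset.range (d + 1)).image l).exists_le
    obtain ⟨L, hL0L, hiL⟩ := directed_of (· ≤ ·) L0 i
    refine ⟨L, hiL, ?_⟩
    ext n
    rw [Polynomial.coeff_map, Polynomial.coeff_map]
    by_cases hn : n ≤ d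
    · have hln : l n ≤ L :=
        le_trans (hL0 _ (Finset.mem_image_of_mem l
          (Finset.mem_range.mpr (Nat.lt_succ_of_le hn)))) hL0L
      calc f i L hiL (p.coeff n)
          = f (l n) L hln (f i (l n) (hl1 n) (p.coeff n)) := (hff i (l n) L (hl1 n) hln _).symm
        _ = f (l n) L hln (f i (l n) (hl2 n) (q.coeff n)) := by rw [he n]
        _ = f i L hiL (q.coeff n) := hff i (l n) L (hl2 n) hln _
    · push_neg at hn
      have hp0 : p.coeff n = 0 :=
        Polynomial.coeff_eq_zero_of_natDegree_lt (lt_of_le_of_lt (le_max_left _ _) hn)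
      have hq0 : q.coeff n = 0 :=
        Polynomial.coeff_eq_zero_of_natDegree_lt (lt_of_le_of_lt (le_max_right _ _) hn)
      rw [hp0, hq0, map_zero]
  -- unit stabilization
  have P3 : ∀ (i : ι) (a : A i), IsUnit (g i a) →
      ∃ (l : ι) (hil : i ≤ l), IsUnit (f i l hil a) := by
    intro i a hu
    obtain ⟨v, hv⟩ := isUnit_iff_exists_inv.mp hu
    obtain ⟨j, b, hb⟩ := hsurj v
    obtain ⟨k, hik, hjk⟩ := directed_of (· ≤ ·) i j
    have hk : g k (f i k hik a * f j k hjk b) = g k 1 := by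
      rw [map_mul, hfg, hfg, hb, hv, map_one]
    obtain ⟨l, hkl, hkl', hl⟩ := hexact k k _ _ hk
    rw [map_one, map_mul, hff, hff] at hl
    exact ⟨l, hik.trans hkl, isUnit_iff_exists_inv.mpr ⟨_, hl⟩⟩
  -- Σ-membership stabilization
  have P4 : ∀ (i : ι) (Q : Polynomial (A i)), Q.map (g i).toRingHom ∈ RSigma Ainf →
      ∃ (l : ι) (hil : i ≤ l), Q.map (f i l hil).toRingHom ∈ RSigma (A l) := by
    intro i Q hQ
    obtain ⟨h0, h1⟩ := mem_RSigma.mp hQ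
    rw [eval_zero_map] at h0
    rw [eval_one_map] at h1
    obtain ⟨l0, hl0, hu0⟩ := P3 i _ h0
    obtain ⟨l1, hl1, hu1⟩ := P3 i _ h1
    obtain ⟨l, h0l, h1l⟩ := directed_of (· ≤ ·) l0 l1
    refine ⟨l, hl0.trans h0l, ?_⟩
    rw [mem_RSigma, eval_zero_map, eval_one_map]
    constructor
    · have := hu0.map (f l0 l h0l)
      rwa [hff i l0 l hl0 h0l] at this
    · have := hu1.map (f l1 l h1l)
      rwa [hff i l1 l hl1 h1l] at this
  -- the induced localized system
  have surjR : ∀ z : RLoc Ainf, ∃ (i : ι) (x : RLoc (A i)), RLocMap B (g i) x = z := by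
    intro z
    obtain ⟨⟨p, Q⟩, rfl⟩ := IsLocalization.mk'_surjective (RSigma Ainf) z
    obtain ⟨i, p', hp'⟩ := P1 p
    obtain ⟨j, Q', hQ'⟩ := P1 Q.1
    obtain ⟨k, hik, hjk⟩ := directed_of (· ≤ ·) i j
    have hQ'' : ((Q'.map (f j k hjk).toRingHom).map (g k).toRingHom) ∈ RSigma Ainf := by
      rw [hmapg, hQ']; exact Q.2
    obtain ⟨l, hkl, hmem⟩ := P4 k _ hQ''
    refine ⟨l, IsLocalization.mk' (RLoc (A l))
      (((p'.map (f i k hik).toRingHom).map (f k l hkl).toRingHom))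
      (⟨(Q'.map (f j k hjk).toRingHom).map (f k l hkl).toRingHom, hmem⟩ : RSigma (A l)), ?_⟩
    rw [RLocMap_mk']
    have e1 : (((p'.map (f i k hik).toRingHom).map (f k l hkl).toRingHom).map
        (g l).toRingHom) = p := by
      rw [hmapg, hmapg, hp']
    have e2 : ((⟨(((Q'.map (f j k hjk).toRingHom).map (f k l hkl).toRingHom).map
        (g l).toRingHom), RSigma.map_mem (g l).toRingHom hmem⟩ : RSigma Ainf)) = Q := by
      apply Subtype.ext
      show (((Q'.map (f j k hjk).toRingHom).map (f k l hkl).toRingHom).map (g l).toRingHom) = Q.1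
      rw [hmapg, hmapg, hQ']
    rw [e1, e2]
  have exactR : ∀ (i j : ι) (x : RLoc (A i)) (y : RLoc (A j)),
      RLocMap B (g i) x = RLocMap B (g j) y →
      ∃ (l : ι) (hil : i ≤ l) (hjl : j ≤ l),
        RLocMap B (f i l hil) x = RLocMap B (f j l hjl) y := by
    intro i j x y hxy
    obtain ⟨⟨p1, Q1⟩, rfl⟩ := IsLocalization.mk'_surjective (RSigma (A i)) x
    obtain ⟨⟨p2, Q2⟩, rfl⟩ := IsLocalization.mk'_surjective (RSigma (A j)) y
    rw [RLocMap_mk', RLocMap_mk', IsLocalization.eq] at hxy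
    obtain ⟨c, hc⟩ := hxy
    obtain ⟨k0, c', hc'⟩ := P1 c.1
    obtain ⟨k1, hk01, hcmem⟩ := P4 k0 c' (by rw [hc']; exact c.2)
    obtain ⟨m0, him0, hjm0⟩ := directed_of (· ≤ ·) i j
    obtain ⟨m, hm0m, hk1m⟩ := directed_of (· ≤ ·) m0 k1
    have him : i ≤ m := him0.trans hm0m
    have hjm : j ≤ m := hjm0.trans hm0m
    have hk0m : k0 ≤ m := hk01.trans hk1m
    -- level-m polynomials
    set X : Polynomial (A m) := c'.map (f k0 m hk0m).toRingHom *
      (Q2.1.map (f j m hjm).toRingHom * p1.map (f i m him).toRingHom) with hX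
    set Y : Polynomial (A m) := c'.map (f k0 m hk0m).toRingHom *
      (Q1.1.map (f i m him).toRingHom * p2.map (f j m hjm).toRingHom) with hY
    have hXY0 : X.map (g m).toRingHom = Y.map (g m).toRingHom := by
      rw [hX, hY, Polynomial.map_mul, Polynomial.map_mul, Polynomial.map_mul,
        Polynomial.map_mul, hmapg, hmapg, hmapg, hmapg, hmapg, hc']
      exact hc
    obtain ⟨L, hmL, hXY⟩ := Pstab m X Y hXY0
    refine ⟨L, him.trans hmL, hjm.trans hmL, ?_⟩
    rw [RLocMap_mk', RLocMap_mk', IsLocalization.eq]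
    have hcmemL : (c'.map (f k0 L (hk0m.trans hmL)).toRingHom) ∈ RSigma (A L) := by
      have := RSigma.map_mem (f k1 L (hk1m.trans hmL)).toRingHom hcmem
      rwa [hmapf] at this
    refine ⟨⟨c'.map (f k0 L (hk0m.trans hmL)).toRingHom, hcmemL⟩, ?_⟩
    rw [hX, hY, Polynomial.map_mul, Polynomial.map_mul, Polynomial.map_mul,
      Polynomial.map_mul, hmapf, hmapf, hmapf, hmapf, hmapf] at hXY
    exact hXY
  -- apply local finite presentation to both systems
  obtain ⟨FAsurj, FAexact⟩ := hF ι A f hf Ainf g hg hsurj hexact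
  obtain ⟨FRsurj, FRexact⟩ := hF ι (fun i => RLoc (A i))
    (fun i j hij => RLocMap B (f i j hij))
    (fun i j l hij hjl => by rw [← RLocMap_comp, hf])
    (RLoc Ainf) (fun i => RLocMap B (g i))
    (fun i j hij => by rw [← RLocMap_comp, hg])
    surjR exactR
  have hFf : ∀ (i k m : ι) (hik : i ≤ k) (hkm : k ≤ m) (x : F.obj (A i)),
      F.map (f k m hkm) (F.map (f i k hik) x) = F.map (f i m (hik.trans hkm)) x := by
    intro i k m hik hkm x
    rw [F.map_map, hf]
  have hFg : ∀ (i k : ι) (hik : i ≤ k) (x : F.obj (A i)),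
      F.map (g k) (F.map (f i k hik) x) = F.map (g i) x := by
    intro i k hik x
    rw [F.map_map, hg]
  -- the key induction
  have key : ∀ (u v : F.obj Ainf), REquiv B F Ainf u v →
      ∀ (i j : ι) (x : F.obj (A i)) (y : F.obj (A j)),
        F.map (g i) x = u → F.map (g j) y = v →
        ∃ (l : ι) (hil : i ≤ l) (hjl : j ≤ l),
          REquiv B F (A l) (F.map (f i l hil) x) (F.map (f j l hjl) y) := by
    intro u v h
    induction h with
    | rel u v huv =>
      intro i j x y hx hy
      obtain ⟨w, h0, h1⟩ := huv
      obtain ⟨k, w', hw'⟩ := FRsurj w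
      have e0 : F.map (g k) (F.map (ev0R B (A k)) w') = u := by
        rw [F.map_map, ← ev0R_naturality, ← F.map_map, hw', h0]
      have e1 : F.map (g k) (F.map (ev1R B (A k)) w') = v := by
        rw [F.map_map, ← ev1R_naturality, ← F.map_map, hw', h1]
      obtain ⟨l0, hkl0, hil0, he0⟩ := FAexact k i _ x (e0.trans hx.symm)
      obtain ⟨l1, hkl1, hjl1, he1⟩ := FAexact k j _ y (e1.trans hy.symm)
      obtain ⟨m, h0m, h1m⟩ := directed_of (· ≤ ·) l0 l1
      have hkm : k ≤ m := hkl0.trans h0m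
      refine ⟨m, hil0.trans h0m, hjl1.trans h1m, Relation.EqvGen.rel _ _
        ⟨F.map (RLocMap B (f k m hkm)) w', ?_, ?_⟩⟩
      · rw [F.map_map, ev0R_naturality, ← F.map_map]
        rw [← hFf k l0 m hkl0 h0m, he0, hFf]
      · rw [F.map_map, ev1R_naturality, ← F.map_map]
        rw [← hFf k l1 m hkl1 h1m, he1, hFf]
    | refl u =>
      intro i j x y hx hy
      obtain ⟨l, hil, hjl, h⟩ := FAexact i j x y (hx.trans hy.symm)
      refine ⟨l, hil, hjl, ?_⟩
      rw [h]
      exact Relation.EqvGen.refl _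
    | symm u v _ ih =>
      intro i j x y hx hy
      obtain ⟨l, hjl, hil, h⟩ := ih j i y x hy hx
      exact ⟨l, hil, hjl, Relation.EqvGen.symm _ _ h⟩
    | trans u v w _ _ ih1 ih2 =>
      intro i j x y hx hy
      obtain ⟨k, z, hz⟩ := FAsurj v
      obtain ⟨l1, hil1, hkl1, h1⟩ := ih1 i k x z hx hz
      obtain ⟨l2, hkl2, hjl2, h2⟩ := ih2 k j z y hz hy
      obtain ⟨m, h1m, h2m⟩ := directed_of (· ≤ ·) l1 l2
      refine ⟨m, hil1.trans h1m, hjl2.trans h2m, ?_⟩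
      have H1 := REquiv_map B F (f l1 m h1m) h1
      have H2 := REquiv_map B F (f l2 m h2m) h2
      rw [hFf, hFf] at H1
      rw [hFf, hFf] at H2
      exact Relation.EqvGen.trans _ _ _ H1 H2
  constructor
  · intro z
    obtain ⟨i, x, hx⟩ := FAsurj z
    refine ⟨i, x, ?_⟩
    rw [hx]
    exact Relation.EqvGen.refl _
  · intro i j x y h
    exact key _ _ h i j x y rfl rfl
end
end

section
/- Let B be a semilocal commutative ring (a ring with only finitely many maximal ideals), let X be a scheme over Spec B, let U be an open subscheme of X, and let x₀, x₁ ∈ X(B) be points that factor through U. If x₀ and x₁ are directly R-equivalent in X(B), i.e. there exists a morphism x : Spec(B[t]_Σ) → X over Spec B with x ∘ Spec(ev₀) = x₀ and x ∘ Spec(ev₁) = x₁, then x factors through U; in particular x₀ and x₁ are directly R-equivalent in U(B). -/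
noncomputable section

open Polynomial

open AlgebraicGeometry CategoryTheory

universe u

/- Auxiliary lemmas -/

lemma ev0_algebraMap {B : Type*} [CommRing B] (p : Polynomial B) :
    ev0 B (algebraMap (Polynomial B) (RLoc B) p) = p.eval 0 := by
  simp [ev0, IsLocalization.liftAlgHom_apply, IsLocalization.lift_eq]

lemma ev1_algebraMap {B : Type*} [CommRing B] (p : Polynomial B) :
    ev1 B (algebraMap (Polynomial B) (RLoc B) p) = p.eval 1 := by
  simp [ev1, IsLocalization.liftAlgHom_apply, IsLocalization.lift_eq]

/-- An element of `B[t]_Σ` whose values at `0` and `1` are units is itself a unit. -/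
lemma isUnit_of_ev {B : Type*} [CommRing B] (z : RLoc B)
    (h0 : IsUnit (ev0 B z)) (h1 : IsUnit (ev1 B z)) : IsUnit z := by
  obtain ⟨⟨f, s⟩, rfl⟩ := IsLocalization.mk'_surjective (RSigma B) z
  dsimp only at h0 h1 ⊢
  have hmul : IsLocalization.mk' (RLoc B) f s *
      algebraMap (Polynomial B) (RLoc B) (s : Polynomial B)
      = algebraMap (Polynomial B) (RLoc B) f := IsLocalization.mk'_spec _ f s
  have hf0 : IsUnit (f.eval 0) := by
    have := congrArg (ev0 B) hmul
    rw [map_mul, ev0_algebraMap, ev0_algebraMap] at this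
    exact this ▸ h0.mul (mem_RSigma.mp s.2).1
  have hf1 : IsUnit (f.eval 1) := by
    have := congrArg (ev1 B) hmul
    rw [map_mul, ev1_algebraMap, ev1_algebraMap] at this
    exact this ▸ h1.mul (mem_RSigma.mp s.2).2
  have hfu : IsUnit (algebraMap (Polynomial B) (RLoc B) f) :=
    IsLocalization.map_units _ (⟨f, hf0, hf1⟩ : RSigma B)
  exact isUnit_of_mul_isUnit_left (hmul ▸ hfu)

lemma ev0_surjective (B : Type*) [CommRing B] : Function.Surjective (ev0 B) :=
  fun b => ⟨algebraMap B (RLoc B) b, (ev0 B).commutes b⟩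

lemma ev1_surjective (B : Type*) [CommRing B] : Function.Surjective (ev1 B) :=
  fun b => ⟨algebraMap B (RLoc B) b, (ev1 B).commutes b⟩

/-- Every prime of `B[t]_Σ` specializes to a prime containing the kernel of `ev0`
or the kernel of `ev1`. -/
lemma exists_specialization {B : Type*} [CommRing B] (P : PrimeSpectrum (RLoc B)) :
    ∃ M : PrimeSpectrum (RLoc B), P.asIdeal ≤ M.asIdeal ∧
      (RingHom.ker (ev0 B).toRingHom ≤ M.asIdeal ∨
       RingHom.ker (ev1 B).toRingHom ≤ M.asIdeal) := by
  by_cases h0 : P.asIdeal ⊔ RingHom.ker (ev0 B).toRingHom = ⊤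
  · by_cases h1 : P.asIdeal ⊔ RingHom.ker (ev1 B).toRingHom = ⊤
    · exfalso
      obtain ⟨a, ha, k, hk, hak⟩ := Submodule.mem_sup.mp
        (h0 ▸ Submodule.mem_top : (1 : RLoc B) ∈ P.asIdeal ⊔ RingHom.ker (ev0 B).toRingHom)
      obtain ⟨b, hb, l, hl, hbl⟩ := Submodule.mem_sup.mp
        (h1 ▸ Submodule.mem_top : (1 : RLoc B) ∈ P.asIdeal ⊔ RingHom.ker (ev1 B).toRingHom)
      have hea : ev0 B a = 1 := by
        have := congrArg (ev0 B) hak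
        rw [map_add, map_one] at this
        rwa [show (ev0 B) k = 0 from RingHom.mem_ker.mp hk, add_zero] at this
      have heb : ev1 B b = 1 := by
        have := congrArg (ev1 B) hbl
        rw [map_add, map_one] at this
        rwa [show (ev1 B) l = 0 from RingHom.mem_ker.mp hl, add_zero] at this
      set Q : RLoc B := a + b - a * b with hQ
      have hQP : Q ∈ P.asIdeal := by
        refine Ideal.sub_mem _ (Ideal.add_mem _ ha hb) (Ideal.mul_mem_right _ _ ha)
      have hQ0 : ev0 B Q = 1 := by
        simp [hQ, map_add, map_sub, map_mul, hea]
      have hQ1 : ev1 B Q = 1 := by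
        simp [hQ, map_add, map_sub, map_mul, heb]
      have : IsUnit Q := isUnit_of_ev Q (hQ0 ▸ isUnit_one) (hQ1 ▸ isUnit_one)
      exact P.isPrime.ne_top (P.asIdeal.eq_top_of_isUnit_mem hQP this)
    · obtain ⟨M, hM, hle⟩ := Ideal.exists_le_maximal _ h1
      exact ⟨⟨M, hM.isPrime⟩, le_trans le_sup_left hle, Or.inr (le_trans le_sup_right hle)⟩
  · obtain ⟨M, hM, hle⟩ := Ideal.exists_le_maximal _ h0
    exact ⟨⟨M, hM.isPrime⟩, le_trans le_sup_left hle, Or.inl (le_trans le_sup_right hle)⟩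

/-!
STATEMENT 12: Let `B` be a semilocal commutative ring, `X` a scheme over `Spec B`,
`U` an open subscheme of `X`, and `x₀, x₁ ∈ X(B)` points factoring through `U`.
If `x₀` and `x₁` are directly R-equivalent in `X(B)`, i.e. connected by a point
`x ∈ X(B[t]_Σ)` over `Spec B`, then `x` factors through `U`; in particular `x₀` and
`x₁` are directly R-equivalent in `U(B)`.
-/

theorem direct_R_equivalence_factors_through_open_subscheme_of_semilocal
    (B : Type u) [CommRing B] [Finite (MaximalSpectrum B)]
    (X : Scheme.{u}) (f : X ⟶ Spec (CommRingCat.of B)) (U : X.Opens)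
    -- the points `x₀, x₁ ∈ X(B)` ...
    (x₀ x₁ : Spec (CommRingCat.of B) ⟶ X)
    (hx₀ : x₀ ≫ f = 𝟙 (Spec (CommRingCat.of B)))
    (hx₁ : x₁ ≫ f = 𝟙 (Spec (CommRingCat.of B)))
    -- ... factor through `U`
    (u₀ u₁ : Spec (CommRingCat.of B) ⟶ (U : Scheme.{u}))
    (hu₀ : u₀ ≫ U.ι = x₀) (hu₁ : u₁ ≫ U.ι = x₁)
    -- a direct R-equivalence between `x₀` and `x₁` in `X(B)`
    (x : Spec (CommRingCat.of (RLoc B)) ⟶ X)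
    (hover : x ≫ f = Spec.map (CommRingCat.ofHom (algebraMap B (RLoc B))))
    (hev0 : Spec.map (CommRingCat.ofHom (ev0 B).toRingHom) ≫ x = x₀)
    (hev1 : Spec.map (CommRingCat.ofHom (ev1 B).toRingHom) ≫ x = x₁) :
    -- `x` factors through `U`, giving a direct R-equivalence between `u₀` and `u₁` in `U(B)`
    ∃ u : Spec (CommRingCat.of (RLoc B)) ⟶ (U : Scheme.{u}),
      u ≫ U.ι = x ∧
      Spec.map (CommRingCat.ofHom (ev0 B).toRingHom) ≫ u = u₀ ∧
      Spec.map (CommRingCat.ofHom (ev1 B).toRingHom) ≫ u = u₁ := by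
  -- The image of `x` is contained in `U`.
  have hrange : Set.range x.base ⊆ Set.range U.ι.base := by
    rw [Scheme.Opens.range_ι]
    rintro _ ⟨P, rfl⟩
    obtain ⟨M, hPM, hker⟩ := exists_specialization P
    -- `x.base M ∈ U` since `M` is in the image of `Spec (ev0)` or `Spec (ev1)`.
    have hMU : x.base M ∈ (U : Set X) := by
      rcases hker with hker | hker
      · have : M ∈ Set.range (PrimeSpectrum.comap (ev0 B).toRingHom) := by
          rw [range_comap_of_surjective _ _ (ev0_surjective B)]
          exact hker
        obtain ⟨q, hq⟩ := this
        have : x.base M = x₀.base q := by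
          rw [← hq, ← hev0]
          rfl
        rw [this, ← hu₀]; erw [Scheme.Hom.comp_apply]
        exact (Scheme.Opens.range_ι U) ▸ Set.mem_range_self _
      · have : M ∈ Set.range (PrimeSpectrum.comap (ev1 B).toRingHom) := by
          rw [range_comap_of_surjective _ _ (ev1_surjective B)]
          exact hker
        obtain ⟨q, hq⟩ := this
        have : x.base M = x₁.base q := by
          rw [← hq, ← hev1]
          rfl
        rw [this, ← hu₁]; erw [Scheme.Hom.comp_apply]
        exact (Scheme.Opens.range_ι U) ▸ Set.mem_range_self _
    -- Open sets are stable under generization.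
    have hspec : P ⤳ M := (PrimeSpectrum.le_iff_specializes P M).mp hPM
    exact (hspec.map x.continuous).mem_open U.2 hMU
  refine ⟨IsOpenImmersion.lift U.ι x hrange, IsOpenImmersion.lift_fac U.ι x hrange, ?_, ?_⟩
  · rw [← cancel_mono U.ι, Category.assoc, IsOpenImmersion.lift_fac, hev0, ← hu₀]
  · rw [← cancel_mono U.ι, Category.assoc, IsOpenImmersion.lift_fac, hev1, ← hu₁]
end
end
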